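/- (Lemma 3.4(i)) In the setting described in the context, with λ real satisfying |λ − n²| ≤ n/2, one has a_n = a_{−n}. -/

import Mathlib

set_option maxHeartbeats 1000000

noncomputable section

/-- Japanese bracket `⟨m⟩ = max {1, |m|}`. -/
def jap (m : ℤ) : ℝ := max 1 |(m : ℝ)|

/-- Squared shifted Sobolev norm `‖u‖_{s;j}²` of a sequence of Fourier coefficients. -/
def shiftNormSq (s : ℝ) (j : ℤ) (u : ℤ → ℂ) : ℝ :=
  ∑' m : ℤ, jap (m + j) ^ (2 * s) * ‖u m‖ ^ 2

/-- Shifted Sobolev norm `‖u‖_{s;j}`. -/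
def shiftNorm (s : ℝ) (j : ℤ) (u : ℤ → ℂ) : ℝ := Real.sqrt (shiftNormSq s j u)

/-- Sobolev norm `‖u‖_s`. -/
def sobNorm (s : ℝ) (u : ℤ → ℂ) : ℝ := shiftNorm s 0 u

/-- Membership in `H^s(𝕋)`. -/
def memHs (s : ℝ) (u : ℤ → ℂ) : Prop :=
  Summable fun m : ℤ => jap m ^ (2 * s) * ‖u m‖ ^ 2

/-- Fourier coefficients of the product `q·w` (convolution). -/
def fconv (q w : ℤ → ℂ) (m : ℤ) : ℂ := ∑' k : ℤ, q k * w (m - k)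

/-- The operator `T_n = T_n(q,λ)`. -/
def TnOp (q : ℤ → ℂ) (lam : ℂ) (n : ℕ) (w : ℤ → ℂ) : ℤ → ℂ := fun m =>
  if |m| = (n : ℤ) then 0 else (lam - (m : ℂ) ^ 2)⁻¹ * fconv q w m

/-- Membership in `𝒬_n`. -/
def memQ (n : ℕ) (w : ℤ → ℂ) : Prop := w (n : ℤ) = 0 ∧ w (-(n : ℤ)) = 0

/-- The Neumann series `Σ_{k≥0} T_n^k w`. -/
def neumann (q : ℤ → ℂ) (lam : ℂ) (n : ℕ) (w : ℤ → ℂ) : ℤ → ℂ := fun m =>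
  ∑' k : ℕ, (TnOp q lam n)^[k] w m

/-- The Fourier coefficients of the exponential `e_p`. -/
def efun (p : ℤ) : ℤ → ℂ := fun k => if k = p then 1 else 0

/-- The function `g_p := e_p + (Id − T_n)^{-1} T_n e_p` (for `p = ±n`),
with the inverse realized by the Neumann series. -/
def gfun (q : ℤ → ℂ) (lam : ℂ) (n : ℕ) (p : ℤ) : ℤ → ℂ :=
  efun p + neumann q lam n (TnOp q lam n (efun p))

open Function
open scoped ENNReal NNReal

/-! ### Basic facts about `jap` -/

lemma jap_pos (m : ℤ) : 0 < jap m := lt_of_lt_of_le one_pos (le_max_left _ _)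

lemma one_le_jap (m : ℤ) : 1 ≤ jap m := le_max_left _ _

lemma jap_nonneg (m : ℤ) : 0 ≤ jap m := (jap_pos m).le

lemma jap_add_le (a b : ℤ) : jap (a + b) ≤ jap a + jap b := by
  apply max_le
  · linarith [one_le_jap a, jap_nonneg b]
  · calc |((a + b : ℤ) : ℝ)| = |(a : ℝ) + (b : ℝ)| := by push_cast; ring_nf
      _ ≤ |(a : ℝ)| + |(b : ℝ)| := abs_add_le _ _
      _ ≤ jap a + jap b := add_le_add (le_max_right _ _) (le_max_right _ _)

lemma jap_rpow_add_le {s : ℝ} (hs : 0 ≤ s) (a b : ℤ) :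
    jap (a + b) ^ s ≤ 2 ^ s * (jap a ^ s + jap b ^ s) := by
  have h1 : jap (a + b) ^ s ≤ (jap a + jap b) ^ s :=
    Real.rpow_le_rpow (jap_nonneg _) (jap_add_le a b) hs
  have h2 : jap a + jap b ≤ 2 * max (jap a) (jap b) := by
    rw [two_mul]; exact add_le_add (le_max_left _ _) (le_max_right _ _)
  have h3 : (jap a + jap b) ^ s ≤ (2 * max (jap a) (jap b)) ^ s :=
    Real.rpow_le_rpow (add_nonneg (jap_nonneg a) (jap_nonneg b)) h2 hs
  have h4 : (2 * max (jap a) (jap b)) ^ s = 2 ^ s * max (jap a) (jap b) ^ s :=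
    Real.mul_rpow (by norm_num) (le_trans (jap_nonneg a) (le_max_left _ _))
  have h5 : max (jap a) (jap b) ^ s ≤ jap a ^ s + jap b ^ s := by
    rcases max_cases (jap a) (jap b) with ⟨h, _⟩ | ⟨h, _⟩ <;> rw [h]
    · exact le_add_of_nonneg_right (Real.rpow_nonneg (jap_nonneg _) _)
    · exact le_add_of_nonneg_left (Real.rpow_nonneg (jap_nonneg _) _)
  calc jap (a + b) ^ s ≤ (2 * max (jap a) (jap b)) ^ s := le_trans h1 h3
    _ = 2 ^ s * max (jap a) (jap b) ^ s := h4
    _ ≤ 2 ^ s * (jap a ^ s + jap b ^ s) := by nlinarith [Real.rpow_nonneg (show (0:ℝ) ≤ 2 by norm_num) s]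

lemma jap_rpow_sq {s : ℝ} (m : ℤ) : jap m ^ s * jap m ^ s = jap m ^ (2 * s) := by
  rw [← Real.rpow_add (jap_pos m)]; ring_nf

/-! ### `ℓ¹` bound from `H^s`, and `ℓ∞` bound -/

lemma summable_norm_of_memHs {s : ℝ} (hs : 1 / 2 < s) {u : ℤ → ℂ} (hu : memHs s u) :
    Summable fun m => ‖u m‖ := by
  have h2s : (1 : ℝ) < 2 * s := by linarith
  have hneg : Summable fun m : ℤ => jap m ^ (-(2 * s)) := by
    have h0 : Summable fun m : ℤ => |(m : ℝ)| ^ (-(2 * s)) := Real.summable_abs_int_rpow h2s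
    have hind : Summable fun m : ℤ => if m = 0 then (1 : ℝ) else 0 := ⟨_, hasSum_ite_eq 0 1⟩
    apply Summable.of_nonneg_of_le (fun m => Real.rpow_nonneg (jap_nonneg m) _) _ (h0.add hind)
    intro m
    by_cases hm : m = 0
    · subst hm
      have : jap 0 = 1 := by simp [jap]
      rw [this, Real.one_rpow]
      have : |((0:ℤ) : ℝ)| ^ (-(2*s)) = 0 := by
        rw [show |((0:ℤ):ℝ)| = 0 by simp, Real.zero_rpow (by linarith)]
      simp only [this]
      simp
    · have habs : (1 : ℝ) ≤ |(m : ℝ)| := by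
        rw [← Int.cast_abs, ← Int.cast_one, Int.cast_le]
        exact Int.one_le_abs (by simpa using hm)
      have : jap m = |(m : ℝ)| := max_eq_right habs
      simp [hm, this, le_refl]
  apply Summable.of_nonneg_of_le (fun m => norm_nonneg _) _
    (((hneg.add hu).mul_left (1 / 2) : Summable _))
  intro m
  have key : 2 * ‖u m‖ ≤ jap m ^ (-(2 * s)) + jap m ^ (2 * s) * ‖u m‖ ^ 2 := by
    have h1 : jap m ^ (-s) * jap m ^ s = 1 := by
      rw [← Real.rpow_add (jap_pos m)]; simp
    have h2 : jap m ^ (-s) * jap m ^ (-s) = jap m ^ (-(2 * s)) := by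
      rw [← Real.rpow_add (jap_pos m)]; ring_nf
    have hAM : 2 * (jap m ^ (-s)) * (jap m ^ s * ‖u m‖) ≤
        (jap m ^ (-s)) ^ 2 + (jap m ^ s * ‖u m‖) ^ 2 := by
      nlinarith [sq_nonneg (jap m ^ (-s) - jap m ^ s * ‖u m‖)]
    have he : 2 * (jap m ^ (-s)) * (jap m ^ s * ‖u m‖) = 2 * ‖u m‖ := by
      calc 2 * (jap m ^ (-s)) * (jap m ^ s * ‖u m‖)
          = 2 * (jap m ^ (-s) * jap m ^ s) * ‖u m‖ := by ring
        _ = 2 * ‖u m‖ := by rw [h1]; ring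
    calc 2 * ‖u m‖ = 2 * (jap m ^ (-s)) * (jap m ^ s * ‖u m‖) := he.symm
      _ ≤ (jap m ^ (-s)) ^ 2 + (jap m ^ s * ‖u m‖) ^ 2 := hAM
      _ = jap m ^ (-(2 * s)) + jap m ^ (2 * s) * ‖u m‖ ^ 2 := by
          rw [sq, h2, mul_pow, sq (jap m ^ s), jap_rpow_sq]
  linarith

lemma norm_le_sobNorm {s : ℝ} (hs : 0 ≤ s) {u : ℤ → ℂ} (hu : memHs s u) (m : ℤ) :
    ‖u m‖ ≤ sobNorm s u := by
  have hcong : (fun m : ℤ => jap (m + 0) ^ (2 * s) * ‖u m‖ ^ 2) =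
      fun m : ℤ => jap m ^ (2 * s) * ‖u m‖ ^ 2 := by
    funext m; rw [add_zero]
  have hsum : Summable fun m : ℤ => jap (m + 0) ^ (2 * s) * ‖u m‖ ^ 2 := by
    rw [hcong]; exact hu
  have h1 : ‖u m‖ ^ 2 ≤ jap (m + 0) ^ (2 * s) * ‖u m‖ ^ 2 := by
    have : (1 : ℝ) ≤ jap (m + 0) ^ (2 * s) := by
      calc (1 : ℝ) = jap (m + 0) ^ (0 : ℝ) := (Real.rpow_zero _).symm
        _ ≤ jap (m + 0) ^ (2 * s) := Real.rpow_le_rpow_of_exponent_le (one_le_jap _) (by linarith)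
    nlinarith [sq_nonneg ‖u m‖]
  have h2 : jap (m + 0) ^ (2 * s) * ‖u m‖ ^ 2 ≤ shiftNormSq s 0 u :=
    Summable.le_tsum hsum m fun b _ => mul_nonneg (Real.rpow_nonneg (jap_nonneg _) _) (sq_nonneg _)
  have h3 : ‖u m‖ ^ 2 ≤ shiftNormSq s 0 u := le_trans h1 h2
  have := Real.sqrt_le_sqrt h3
  rwa [Real.sqrt_sq (norm_nonneg _)] at this

/-! ### ENNReal helpers -/

lemma tsum_sub_right {M : Type*} [AddCommMonoid M] [TopologicalSpace M] [T2Space M]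
    (g : ℤ → M) (j : ℤ) : ∑' m, g (m - j) = ∑' m, g m := by
  simpa using (Equiv.subRight j).tsum_eq g

lemma tsum_sub_left {M : Type*} [AddCommMonoid M] [TopologicalSpace M] [T2Space M]
    (g : ℤ → M) (j : ℤ) : ∑' m, g (j - m) = ∑' m, g m := by
  simpa using (Equiv.subLeft j).tsum_eq g

lemma tsum_neg_index {M : Type*} [AddCommMonoid M] [TopologicalSpace M] [T2Space M]
    (g : ℤ → M) : ∑' m, g (-m) = ∑' m, g m := by
  simpa using (Equiv.neg ℤ).tsum_eq g

lemma enn_tsum_ne_top {g : ℤ → ℝ} (hg : ∀ m, 0 ≤ g m) (hsum : Summable g) :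
    ∑' m, ENNReal.ofReal (g m) ≠ ⊤ := by
  have : (fun m => ENNReal.ofReal (g m)) = fun m => ((g m).toNNReal : ℝ≥0∞) := rfl
  rw [this]
  exact ENNReal.tsum_coe_ne_top_iff_summable.2 hsum.toNNReal

lemma summable_of_enn_tsum_ne_top {g : ℤ → ℝ} (hg : ∀ m, 0 ≤ g m)
    (h : ∑' m, ENNReal.ofReal (g m) ≠ ⊤) : Summable g := by
  have h2 : Summable fun m => (g m).toNNReal := ENNReal.tsum_coe_ne_top_iff_summable.1 h
  have h3 : Summable fun m => (((g m).toNNReal : ℝ≥0) : ℝ) := NNReal.summable_coe.2 h2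
  exact h3.congr fun m => Real.coe_toNNReal _ (hg m)

lemma enn_ofReal_norm_tsum_le {ι : Type*} (f : ι → ℂ) :
    ENNReal.ofReal ‖∑' i, f i‖ ≤ ∑' i, ENNReal.ofReal ‖f i‖ := by
  simp only [ofReal_norm, enorm_eq_nnnorm]
  by_cases h : Summable fun i => ‖f i‖₊
  · rw [← ENNReal.coe_tsum h]
    exact ENNReal.coe_le_coe.2 (nnnorm_tsum_le h)
  · rw [ENNReal.tsum_coe_eq_top_iff_not_summable_coe.2 ?_]
    · exact le_top
    · rwa [NNReal.summable_coe]
/-! ### Operator decomposition `T = Dop ∘ Cop` -/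

/-- Diagonal coefficient. -/
def Dco (lam : ℂ) (n : ℕ) (m : ℤ) : ℂ := if |m| = (n : ℤ) then 0 else (lam - (m : ℂ) ^ 2)⁻¹

/-- Diagonal operator. -/
def Dop (lam : ℂ) (n : ℕ) (u : ℤ → ℂ) : ℤ → ℂ := fun m => Dco lam n m * u m

/-- Convolution operator. -/
def Cop (q : ℤ → ℂ) (u : ℤ → ℂ) : ℤ → ℂ := fun m => fconv q u m

lemma TnOp_eq (q : ℤ → ℂ) (lam : ℂ) (n : ℕ) :
    TnOp q lam n = Dop lam n ∘ Cop q := by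
  funext w m
  simp only [TnOp, Dop, Cop, Dco, comp_apply, ite_mul, zero_mul]

lemma Dco_neg (lam : ℂ) (n : ℕ) (m : ℤ) : Dco lam n (-m) = Dco lam n m := by
  simp only [Dco, abs_neg]
  norm_cast
  rw [neg_pow]
  simp

/-- Bound `‖(λ - m²)⁻¹‖ ≤ 2` on the diagonal, for real `λ` near `n²`. -/
lemma Dco_norm_le {n : ℕ} (hn : 1 ≤ n) {lam : ℝ} (hlam : |lam - (n : ℝ) ^ 2| ≤ (n : ℝ) / 2)
    (m : ℤ) : ‖Dco (lam : ℂ) n m‖ ≤ 2 := by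
  unfold Dco
  split_ifs with h
  · simp
  · -- `|m| ≠ n`
    have hmn : m ≠ (n : ℤ) := fun he => h (by rw [he]; exact abs_of_nonneg (Int.natCast_nonneg n))
    have hmn' : m ≠ -(n : ℤ) := fun he => h (by rw [he, abs_neg]; exact abs_of_nonneg (Int.natCast_nonneg n))
    have hint : (n : ℤ) ≤ |m ^ 2 - (n : ℤ) ^ 2| := by
      have ha : (1 : ℤ) ≤ |m - (n : ℤ)| := Int.one_le_abs (sub_ne_zero.2 hmn)
      have hb : (1 : ℤ) ≤ |m + (n : ℤ)| := Int.one_le_abs (by intro he; exact hmn' (by linarith))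
      have hfac : |m ^ 2 - (n : ℤ) ^ 2| = |m - (n : ℤ)| * |m + (n : ℤ)| := by
        rw [← abs_mul]; ring_nf
      have hsum : 2 * (n : ℤ) ≤ |m - (n : ℤ)| + |m + (n : ℤ)| := by
        calc 2 * (n : ℤ) = |(m + n) - (m - n)| := by
              rw [show (m + (n:ℤ)) - (m - n) = 2 * n by ring]
              exact (abs_of_nonneg (by positivity)).symm
          _ ≤ |m + (n : ℤ)| + |m - (n : ℤ)| := abs_sub _ _
          _ = |m - (n : ℤ)| + |m + (n : ℤ)| := by ring
      have hn1 : (1 : ℤ) ≤ (n : ℤ) := by exact_mod_cast hn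
      nlinarith [abs_nonneg (m - (n:ℤ)), abs_nonneg (m + (n:ℤ))]
    have hreal : (n : ℝ) ≤ |(m : ℝ) ^ 2 - (n : ℝ) ^ 2| := by
      have := (Int.cast_le (R := ℝ)).2 hint
      rwa [Int.cast_abs, Int.cast_sub, Int.cast_pow, Int.cast_pow, Int.cast_natCast] at this
    have hlow : (1 : ℝ) / 2 ≤ |lam - (m : ℝ) ^ 2| := by
      have htri : |(m : ℝ) ^ 2 - (n : ℝ) ^ 2| ≤ |(m : ℝ) ^ 2 - lam| + |lam - (n : ℝ) ^ 2| := by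
        calc |(m : ℝ) ^ 2 - (n : ℝ) ^ 2| = |((m : ℝ) ^ 2 - lam) + (lam - (n : ℝ) ^ 2)| := by ring_nf
          _ ≤ _ := abs_add_le _ _
      have habs : |(m : ℝ) ^ 2 - lam| = |lam - (m : ℝ) ^ 2| := abs_sub_comm _ _
      have hn1 : (1 : ℝ) ≤ (n : ℝ) := by exact_mod_cast hn
      linarith
    have hcast : ((lam : ℂ) - (m : ℂ) ^ 2) = ((lam - (m : ℝ) ^ 2 : ℝ) : ℂ) := by push_cast; ring
    rw [norm_inv, hcast, Complex.norm_real, Real.norm_eq_abs]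
    have hpos : (0 : ℝ) < |lam - (m : ℝ) ^ 2| := lt_of_lt_of_le (by norm_num) hlow
    rw [show (2 : ℝ) = (1 / 2 : ℝ)⁻¹ by norm_num]
    exact inv_anti₀ (by norm_num) hlow

/-! ### Pointwise summability and boundedness for convolutions -/

/-- Bounded sequences. -/
def IsBdd (u : ℤ → ℂ) : Prop := ∃ C : ℝ, ∀ m, ‖u m‖ ≤ C

lemma summable_conv_term {q u : ℤ → ℂ} (hq1 : Summable fun j => ‖q j‖) {C : ℝ}
    (hu : ∀ m, ‖u m‖ ≤ C) (m : ℤ) : Summable fun j => q j * u (m - j) :=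
  Summable.of_norm_bounded (hq1.mul_right C) fun j => by
    rw [norm_mul]
    exact mul_le_mul_of_nonneg_left (hu _) (norm_nonneg _)

lemma norm_fconv_le {q u : ℤ → ℂ} (hq1 : Summable fun j => ‖q j‖) {C : ℝ}
    (hu : ∀ m, ‖u m‖ ≤ C) (m : ℤ) : ‖fconv q u m‖ ≤ (∑' j, ‖q j‖) * C := by
  have h1 : Summable fun j => ‖q j * u (m - j)‖ :=
    (hq1.mul_right C).of_nonneg_of_le (fun j => norm_nonneg _) fun j => by
      rw [norm_mul]; exact mul_le_mul_of_nonneg_left (hu _) (norm_nonneg _)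
  calc ‖fconv q u m‖ ≤ ∑' j, ‖q j * u (m - j)‖ := norm_tsum_le_tsum_norm h1
    _ ≤ ∑' j, ‖q j‖ * C := Summable.tsum_le_tsum (fun j => by
        rw [norm_mul]; exact mul_le_mul_of_nonneg_left (hu _) (norm_nonneg _)) h1 (hq1.mul_right C)
    _ = (∑' j, ‖q j‖) * C := tsum_mul_right

lemma isBdd_Cop {q u : ℤ → ℂ} (hq1 : Summable fun j => ‖q j‖) (hu : IsBdd u) :
    IsBdd (Cop q u) := by
  obtain ⟨C, hC⟩ := hu
  exact ⟨(∑' j, ‖q j‖) * C, fun m => norm_fconv_le hq1 hC m⟩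

lemma isBdd_Dop {lam : ℂ} {n : ℕ} {u : ℤ → ℂ} (hD : ∀ m, ‖Dco lam n m‖ ≤ 2)
    (hu : IsBdd u) : IsBdd (Dop lam n u) := by
  obtain ⟨C, hC⟩ := hu
  have hC0 : 0 ≤ C := le_trans (norm_nonneg _) (hC 0)
  exact ⟨2 * C, fun m => by
    rw [Dop, norm_mul]
    exact mul_le_mul (hD m) (hC m) (norm_nonneg _) (by norm_num)⟩

lemma isBdd_iter {q : ℤ → ℂ} {lam : ℂ} {n : ℕ} (hq1 : Summable fun j => ‖q j‖)
    (hD : ∀ m, ‖Dco lam n m‖ ≤ 2) {u : ℤ → ℂ} (hu : IsBdd u) (j : ℕ) :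
    IsBdd ((Cop q ∘ Dop lam n)^[j] u) := by
  induction j with
  | zero => simpa using hu
  | succ j ih =>
      rw [iterate_succ_apply']
      exact isBdd_Cop hq1 (isBdd_Dop hD ih)

lemma l1_Cop {q v : ℤ → ℂ} (hq1 : Summable fun j => ‖q j‖)
    (hv : Summable fun m => ‖v m‖) : Summable fun m => ‖Cop q v m‖ := by
  apply summable_of_enn_tsum_ne_top (fun m => norm_nonneg _)
  have key : ∀ m, ENNReal.ofReal ‖Cop q v m‖ ≤
      ∑' j, ENNReal.ofReal ‖q j‖ * ENNReal.ofReal ‖v (m - j)‖ := by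
    intro m
    calc ENNReal.ofReal ‖Cop q v m‖ ≤ ∑' j, ENNReal.ofReal ‖q j * v (m - j)‖ :=
          enn_ofReal_norm_tsum_le _
      _ = ∑' j, ENNReal.ofReal ‖q j‖ * ENNReal.ofReal ‖v (m - j)‖ := by
          congr 1; funext j; rw [norm_mul, ENNReal.ofReal_mul (norm_nonneg _)]
  have tot : ∑' m, ∑' j, ENNReal.ofReal ‖q j‖ * ENNReal.ofReal ‖v (m - j)‖
      = (∑' j, ENNReal.ofReal ‖q j‖) * ∑' m, ENNReal.ofReal ‖v m‖ := by
    rw [ENNReal.tsum_comm]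
    calc ∑' j, ∑' m, ENNReal.ofReal ‖q j‖ * ENNReal.ofReal ‖v (m - j)‖
        = ∑' j, ENNReal.ofReal ‖q j‖ * ∑' m, ENNReal.ofReal ‖v (m - j)‖ := by
          congr 1; funext j; rw [ENNReal.tsum_mul_left]
      _ = ∑' j, ENNReal.ofReal ‖q j‖ * ∑' m, ENNReal.ofReal ‖v m‖ := by
          congr 1; funext j; rw [tsum_sub_right (fun m => ENNReal.ofReal ‖v m‖) j]
      _ = _ := ENNReal.tsum_mul_right
  apply ne_top_of_le_ne_top _ (ENNReal.tsum_le_tsum key)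
  rw [tot]
  exact ENNReal.mul_ne_top (enn_tsum_ne_top (fun _ => norm_nonneg _) hq1)
    (enn_tsum_ne_top (fun _ => norm_nonneg _) hv)

lemma l1_Dop {lam : ℂ} {n : ℕ} {v : ℤ → ℂ} (hD : ∀ m, ‖Dco lam n m‖ ≤ 2)
    (hv : Summable fun m => ‖v m‖) : Summable fun m => ‖Dop lam n v m‖ :=
  Summable.of_nonneg_of_le (fun m => norm_nonneg _)
    (fun m => by
      rw [Dop, norm_mul]
      exact mul_le_mul (hD m) le_rfl (norm_nonneg _) (by norm_num))
    (hv.mul_left 2)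
/-! ### The bilinear pairing and transposition -/

/-- Plain bilinear pairing `∑ u(m) v(m)`. -/
def Spair (u v : ℤ → ℂ) : ℂ := ∑' m, u m * v m

lemma Spair_efun (u : ℤ → ℂ) (p : ℤ) : Spair u (efun p) = u p := by
  unfold Spair efun
  rw [tsum_eq_single p]
  · simp
  · intro b hb; simp [hb]

lemma summable_norm_efun (p : ℤ) : Summable fun m => ‖efun p m‖ := by
  have : Summable fun m : ℤ => if m = p then (1 : ℝ) else 0 := ⟨_, hasSum_ite_eq p 1⟩
  apply this.congr
  intro m
  simp only [efun]
  split_ifs <;> simp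

lemma isBdd_efun (p : ℤ) : IsBdd (efun p) :=
  ⟨1, fun m => by simp only [efun]; split_ifs <;> simp⟩

lemma Cop_efun {q : ℤ → ℂ} (p m : ℤ) : Cop q (efun p) m = q (m - p) := by
  unfold Cop fconv efun
  rw [show (fun j => q j * if m - j = p then (1:ℂ) else 0)
      = fun j => if j = m - p then q (m - p) else 0 by
    funext j
    by_cases h : j = m - p
    · subst h; rw [if_pos (by ring), if_pos rfl, mul_one]
    · rw [if_neg (by omega), if_neg h, mul_zero]]
  exact tsum_ite_eq (m - p) (fun _ => q (m - p))

/-- The shear equivalence `(m, j) ↦ (m + j, j)` on `ℤ × ℤ`. -/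
def shearEquiv : ℤ × ℤ ≃ ℤ × ℤ where
  toFun p := (p.1 + p.2, p.2)
  invFun p := (p.1 - p.2, p.2)
  left_inv p := by simp
  right_inv p := by simp

/-- Transposition of the convolution operator: `⟨C_q u, v⟩ = ⟨u, C_{q̃} v⟩`. -/
lemma Spair_Cop {q u v : ℤ → ℂ} (hq1 : Summable fun j => ‖q j‖) {C : ℝ}
    (hu : ∀ m, ‖u m‖ ≤ C) (hv : Summable fun m => ‖v m‖) :
    Spair (Cop q u) v = Spair u (Cop (fun k => q (-k)) v) := by
  have hC0 : 0 ≤ C := le_trans (norm_nonneg _) (hu 0)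
  set f : ℤ × ℤ → ℂ := fun p => q p.2 * u (p.1 - p.2) * v p.1 with hf_def
  have hf : Summable f := by
    apply Summable.of_norm_bounded (g := fun p : ℤ × ℤ => ‖v p.1‖ * (‖q p.2‖ * C))
      (hv.mul_of_nonneg (hq1.mul_right C) (fun m => norm_nonneg _)
        (fun j => mul_nonneg (norm_nonneg _) hC0))
    intro p
    rw [norm_mul, norm_mul]
    calc ‖q p.2‖ * ‖u (p.1 - p.2)‖ * ‖v p.1‖ ≤ ‖q p.2‖ * C * ‖v p.1‖ := by
          exact mul_le_mul_of_nonneg_right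
            (mul_le_mul_of_nonneg_left (hu _) (norm_nonneg _)) (norm_nonneg _)
      _ = ‖v p.1‖ * (‖q p.2‖ * C) := by ring
  have step1 : Spair (Cop q u) v = ∑' p : ℤ × ℤ, f p := by
    unfold Spair Cop fconv
    rw [Summable.tsum_prod hf]
    congr 1; funext m
    rw [← tsum_mul_right]
  have hf2 : Summable fun p : ℤ × ℤ => f (shearEquiv p) := shearEquiv.summable_iff.2 hf
  have step2 : ∑' p : ℤ × ℤ, f p = ∑' p : ℤ × ℤ, f (shearEquiv p) :=
    (shearEquiv.tsum_eq f).symm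
  have step3 : ∑' p : ℤ × ℤ, f (shearEquiv p) = Spair u (Cop (fun k => q (-k)) v) := by
    rw [Summable.tsum_prod hf2]
    unfold Spair Cop fconv
    congr 1; funext m
    have : ∀ j : ℤ, f (shearEquiv (m, j)) = u m * (q j * v (m + j)) := by
      intro j
      simp only [shearEquiv, hf_def, Equiv.coe_fn_mk, add_sub_cancel_right]
      ring
    rw [tsum_congr this, tsum_mul_left]
    congr 1
    rw [← tsum_neg_index (fun j => q j * v (m + j))]
    exact tsum_congr fun k => by rw [sub_eq_add_neg]
  rw [step1, step2, step3]

/-- Transposition of the diagonal operator. -/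
lemma Spair_Dop {lam : ℂ} {n : ℕ} (u v : ℤ → ℂ) :
    Spair (Dop lam n u) v = Spair u (Dop lam n v) := by
  unfold Spair Dop
  exact tsum_congr fun m => by ring

/-- Iterated transposition. -/
lemma Spair_iter {q : ℤ → ℂ} {lam : ℂ} {n : ℕ} (hq1 : Summable fun j => ‖q j‖)
    (hD : ∀ m, ‖Dco lam n m‖ ≤ 2) :
    ∀ (j : ℕ) (u v : ℤ → ℂ), IsBdd u → (Summable fun m => ‖v m‖) →
      Spair ((Cop q ∘ Dop lam n)^[j] u) v
        = Spair u ((Dop lam n ∘ Cop (fun k => q (-k)))^[j] v) := by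
  have hqt1 : Summable fun j => ‖q (-j)‖ := by
    exact (Equiv.neg ℤ).summable_iff.2 hq1
  intro j
  induction j with
  | zero => intro u v _ _; simp
  | succ j ih =>
      intro u v hu hv
      rw [iterate_succ_apply']
      obtain ⟨C, hC⟩ := isBdd_Dop hD (isBdd_iter hq1 hD hu j)
      calc Spair ((Cop q ∘ Dop lam n) ((Cop q ∘ Dop lam n)^[j] u)) v
          = Spair (Cop q (Dop lam n ((Cop q ∘ Dop lam n)^[j] u))) v := rfl
        _ = Spair (Dop lam n ((Cop q ∘ Dop lam n)^[j] u)) (Cop (fun k => q (-k)) v) :=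
            Spair_Cop hq1 hC hv
        _ = Spair ((Cop q ∘ Dop lam n)^[j] u) (Dop lam n (Cop (fun k => q (-k)) v)) :=
            Spair_Dop _ _
        _ = Spair u ((Dop lam n ∘ Cop (fun k => q (-k)))^[j]
              (Dop lam n (Cop (fun k => q (-k)) v))) :=
            ih u _ hu (l1_Dop hD (l1_Cop hqt1 hv))
        _ = Spair u ((Dop lam n ∘ Cop (fun k => q (-k)))^[j + 1] v) := by
            rw [iterate_succ_apply]
            rfl

lemma comp_iterate {α : Type*} (f g : α → α) (j : ℕ) (x : α) :
    f ((g ∘ f)^[j] x) = (f ∘ g)^[j] (f x) := by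
  induction j generalizing x with
  | zero => simp
  | succ j ih =>
      rw [iterate_succ_apply, iterate_succ_apply]
      exact ih (g (f x))
/-! ### The per-iterate transposition identity -/

lemma perk_transpose {q : ℤ → ℂ} {lam : ℂ} {n : ℕ} (hq1 : Summable fun j => ‖q j‖)
    (hD : ∀ m, ‖Dco lam n m‖ ≤ 2) (k : ℕ) :
    fconv q ((TnOp q lam n)^[k + 1] (efun (n : ℤ))) (n : ℤ)
      = fconv (fun j => q (-j)) ((TnOp (fun j => q (-j)) lam n)^[k + 1] (efun (n : ℤ))) (n : ℤ) := by
  have hTq : TnOp q lam n = Dop lam n ∘ Cop q := TnOp_eq q lam n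
  have hTqt : TnOp (fun j => q (-j)) lam n = Dop lam n ∘ Cop (fun j => q (-j)) :=
    TnOp_eq _ lam n
  set V := (Dop lam n ∘ Cop (fun j => q (-j)))^[k + 1] (efun (n : ℤ)) with hV
  have lhs1 : fconv q ((TnOp q lam n)^[k + 1] (efun (n : ℤ))) (n : ℤ)
      = ((Cop q ∘ Dop lam n)^[k + 1] (Cop q (efun (n : ℤ)))) (n : ℤ) := by
    rw [hTq]
    show Cop q ((Dop lam n ∘ Cop q)^[k + 1] (efun (n : ℤ))) (n : ℤ) = _
    rw [comp_iterate (Cop q) (Dop lam n) (k + 1) (efun (n : ℤ))]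
  have lhs2 : ((Cop q ∘ Dop lam n)^[k + 1] (Cop q (efun (n : ℤ)))) (n : ℤ)
      = Spair ((Cop q ∘ Dop lam n)^[k + 1] (Cop q (efun (n : ℤ)))) (efun (n : ℤ)) :=
    (Spair_efun _ _).symm
  have lhs3 : Spair ((Cop q ∘ Dop lam n)^[k + 1] (Cop q (efun (n : ℤ)))) (efun (n : ℤ))
      = Spair (Cop q (efun (n : ℤ))) V := by
    obtain ⟨C, hC⟩ := isBdd_Cop hq1 (isBdd_efun (n : ℤ))
    exact Spair_iter hq1 hD (k + 1) _ _ ⟨C, hC⟩ (summable_norm_efun (n : ℤ))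
  have lhs4 : Spair (Cop q (efun (n : ℤ))) V = ∑' m, q (m - n) * V m := by
    unfold Spair
    exact tsum_congr fun m => by rw [Cop_efun]
  have rhs1 : fconv (fun j => q (-j)) ((TnOp (fun j => q (-j)) lam n)^[k + 1]
      (efun (n : ℤ))) (n : ℤ) = ∑' j, q (-j) * V ((n : ℤ) - j) := by
    rw [hTqt]
    rfl
  rw [lhs1, lhs2, lhs3, lhs4, rhs1]
  rw [← tsum_sub_left (fun m => q (m - n) * V m) (n : ℤ)]
  exact tsum_congr fun m => by rw [show (n : ℤ) - m - n = -m by ring]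

/-! ### Reflection symmetry -/

lemma fconv_reflect {q w : ℤ → ℂ} (p : ℤ) :
    fconv q (fun x => w (-x)) (-p) = fconv (fun j => q (-j)) w p := by
  unfold fconv
  calc ∑' k, q k * w (-(-p - k)) = ∑' k, q k * w (p + k) :=
        tsum_congr fun k => by rw [show -(-p - k) = p + k by ring]
    _ = ∑' k, q (-k) * w (p + -k) := (tsum_neg_index fun k => q k * w (p + k)).symm
    _ = ∑' k, q (-k) * w (p - k) := tsum_congr fun k => by rw [sub_eq_add_neg]

lemma TnOp_reflect {q : ℤ → ℂ} {lam : ℂ} {n : ℕ} (w : ℤ → ℂ) (m : ℤ) :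
    TnOp q lam n (fun x => w (-x)) m = TnOp (fun j => q (-j)) lam n w (-m) := by
  have hconv : fconv q (fun x => w (-x)) m = fconv (fun j => q (-j)) w (-m) := by
    simpa using fconv_reflect (q := q) (w := w) (-m)
  simp only [TnOp, abs_neg]
  rw [hconv, show (((-m : ℤ) : ℂ)) ^ 2 = ((m : ℤ) : ℂ) ^ 2 by push_cast; ring]

lemma iter_reflect {q : ℤ → ℂ} {lam : ℂ} {n : ℕ} :
    ∀ (j : ℕ) (w : ℤ → ℂ) (m : ℤ),
      (TnOp q lam n)^[j] (fun x => w (-x)) m = (TnOp (fun k => q (-k)) lam n)^[j] w (-m)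
  | 0, w, m => rfl
  | (j + 1), w, m => by
      rw [iterate_succ_apply, iterate_succ_apply]
      rw [show TnOp q lam n (fun x => w (-x))
          = fun x => (TnOp (fun k => q (-k)) lam n w) (-x) from
        funext fun x => TnOp_reflect w x]
      exact iter_reflect j (TnOp (fun k => q (-k)) lam n w) m

lemma perk_reflect {q : ℤ → ℂ} {lam : ℂ} {n : ℕ} (k : ℕ) :
    fconv q ((TnOp q lam n)^[k + 1] (efun (-(n : ℤ)))) (-(n : ℤ))
      = fconv (fun j => q (-j)) ((TnOp (fun j => q (-j)) lam n)^[k + 1] (efun (n : ℤ))) (n : ℤ) := by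
  have he : efun (-(n : ℤ)) = fun x => efun (n : ℤ) (-x) := by
    funext x
    by_cases h : x = -(n : ℤ)
    · simp [efun, h]
    · have h2 : ¬(-x = (n : ℤ)) := by omega
      simp [efun, h, h2]
  rw [he]
  have h2 : (TnOp q lam n)^[k + 1] (fun x => efun (n : ℤ) (-x))
      = fun m => (TnOp (fun j => q (-j)) lam n)^[k + 1] (efun (n : ℤ)) (-m) :=
    funext fun m => iter_reflect (k + 1) _ m
  rw [h2]
  exact fconv_reflect (n : ℤ)
/-! ### ENNReal Young inequality `‖A ⋆ b‖₂ ≲ ‖A‖₂ ‖b‖₁` and `H^s` stability -/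

lemma enn_mul_le_sq_add_sq (x y : ℝ≥0∞) : x * y ≤ x ^ 2 + y ^ 2 := by
  rcases le_total x y with h | h
  · have h1 : x * y ≤ y ^ 2 := by rw [sq]; exact mul_le_mul_left h _
    exact h1.trans le_add_self
  · have h1 : x * y ≤ x ^ 2 := by rw [sq]; exact mul_le_mul_right h _
    exact h1.trans (self_le_add_right _ _)

lemma conv_comm_enn (f g : ℤ → ℝ≥0∞) (m : ℤ) :
    ∑' j, f j * g (m - j) = ∑' j, g j * f (m - j) := by
  calc ∑' j, f j * g (m - j)
      = ∑' j, f (m - j) * g (m - (m - j)) :=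
        (tsum_sub_left (fun j => f j * g (m - j)) m).symm
    _ = ∑' j, g j * f (m - j) := tsum_congr fun j => by
        rw [show m - (m - j) = j by ring, mul_comm]

lemma enn_sq_add_le (x y : ℝ≥0∞) : (x + y) ^ 2 ≤ 3 * (x ^ 2 + y ^ 2) := by
  have h1 : (x + y) ^ 2 = x ^ 2 + 2 * (x * y) + y ^ 2 := by ring
  have h2 : x ^ 2 + 2 * (x * y) + y ^ 2 ≤ x ^ 2 + 2 * (x ^ 2 + y ^ 2) + y ^ 2 := by
    gcongr
    exact enn_mul_le_sq_add_sq x y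
  calc (x + y) ^ 2 ≤ x ^ 2 + 2 * (x ^ 2 + y ^ 2) + y ^ 2 := h1 ▸ h2
    _ = 3 * (x ^ 2 + y ^ 2) := by ring

lemma enn_young (A b : ℤ → ℝ≥0∞) :
    ∑' m, (∑' j, A j * b (m - j)) ^ 2
      ≤ 2 * ((∑' j, A j ^ 2) * (∑' j, b j) ^ 2) := by
  set Sb := ∑' j, b j with hSb
  have hsub : ∀ m : ℤ, ∑' j, b (m - j) = Sb := fun m => tsum_sub_left b m
  have key : ∀ m, (∑' j, A j * b (m - j)) ^ 2
      ≤ 2 * ((∑' j, A j ^ 2 * b (m - j)) * Sb) := by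
    intro m
    have expand : (∑' j, A j * b (m - j)) ^ 2
        = ∑' j, ∑' j', (A j * b (m - j)) * (A j' * b (m - j')) := by
      rw [sq, ← ENNReal.tsum_mul_right]
      exact tsum_congr fun j => (ENNReal.tsum_mul_left).symm
    have hle : ∀ j j', (A j * b (m - j)) * (A j' * b (m - j'))
        ≤ (A j ^ 2 + A j' ^ 2) * (b (m - j) * b (m - j')) := by
      intro j j'
      calc (A j * b (m - j)) * (A j' * b (m - j'))
          = (A j * A j') * (b (m - j) * b (m - j')) := by ring
        _ ≤ _ := mul_le_mul_left (enn_mul_le_sq_add_sq _ _) _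
    have split : ∑' j, ∑' j', (A j ^ 2 + A j' ^ 2) * (b (m - j) * b (m - j'))
        = (∑' j, A j ^ 2 * b (m - j)) * Sb + Sb * (∑' j', A j' ^ 2 * b (m - j')) := by
      have h1 : ∀ j j', (A j ^ 2 + A j' ^ 2) * (b (m - j) * b (m - j'))
          = (A j ^ 2 * b (m - j)) * b (m - j') + b (m - j) * (A j' ^ 2 * b (m - j')) := by
        intro j j'; ring
      calc ∑' j, ∑' j', (A j ^ 2 + A j' ^ 2) * (b (m - j) * b (m - j'))
          = ∑' j, ((∑' j', (A j ^ 2 * b (m - j)) * b (m - j'))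
              + ∑' j', b (m - j) * (A j' ^ 2 * b (m - j'))) := by
            refine tsum_congr fun j => ?_
            rw [← ENNReal.tsum_add]
            exact tsum_congr fun j' => h1 j j'
        _ = (∑' j, ∑' j', (A j ^ 2 * b (m - j)) * b (m - j'))
              + ∑' j, ∑' j', b (m - j) * (A j' ^ 2 * b (m - j')) := ENNReal.tsum_add
        _ = (∑' j, A j ^ 2 * b (m - j)) * Sb + Sb * (∑' j', A j' ^ 2 * b (m - j')) := by
            congr 1
            · calc ∑' j, ∑' j', (A j ^ 2 * b (m - j)) * b (m - j')
                  = ∑' j, (A j ^ 2 * b (m - j)) * Sb := by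
                    refine tsum_congr fun j => ?_
                    rw [ENNReal.tsum_mul_left, hsub m]
                _ = _ := ENNReal.tsum_mul_right
            · calc ∑' j, ∑' j', b (m - j) * (A j' ^ 2 * b (m - j'))
                  = ∑' j, b (m - j) * (∑' j', A j' ^ 2 * b (m - j')) := by
                    refine tsum_congr fun j => ?_
                    rw [ENNReal.tsum_mul_left]
                _ = Sb * (∑' j', A j' ^ 2 * b (m - j')) := by
                    rw [ENNReal.tsum_mul_right, hsub m]
    calc (∑' j, A j * b (m - j)) ^ 2
        = ∑' j, ∑' j', (A j * b (m - j)) * (A j' * b (m - j')) := expand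
      _ ≤ ∑' j, ∑' j', (A j ^ 2 + A j' ^ 2) * (b (m - j) * b (m - j')) :=
          ENNReal.tsum_le_tsum fun j => ENNReal.tsum_le_tsum fun j' => hle j j'
      _ = (∑' j, A j ^ 2 * b (m - j)) * Sb + Sb * (∑' j', A j' ^ 2 * b (m - j')) := split
      _ = 2 * ((∑' j, A j ^ 2 * b (m - j)) * Sb) := by ring
  have fub : ∑' m : ℤ, ∑' j, A j ^ 2 * b (m - j) = (∑' j, A j ^ 2) * Sb := by
    rw [ENNReal.tsum_comm]
    calc ∑' j, ∑' m : ℤ, A j ^ 2 * b (m - j)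
        = ∑' j, A j ^ 2 * ∑' m : ℤ, b (m - j) := tsum_congr fun j => ENNReal.tsum_mul_left
      _ = ∑' j, A j ^ 2 * Sb := tsum_congr fun j => by rw [tsum_sub_right b j]
      _ = _ := ENNReal.tsum_mul_right
  calc ∑' m, (∑' j, A j * b (m - j)) ^ 2
      ≤ ∑' m, 2 * ((∑' j, A j ^ 2 * b (m - j)) * Sb) := ENNReal.tsum_le_tsum key
    _ = 2 * ((∑' m : ℤ, ∑' j, A j ^ 2 * b (m - j)) * Sb) := by
        rw [ENNReal.tsum_mul_left, ENNReal.tsum_mul_right]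
    _ = 2 * ((∑' j, A j ^ 2) * Sb ^ 2) := by rw [fub, sq]; ring

/-- `H^s` is stable under convolution (Sobolev algebra property, `s > 1/2`). -/
lemma memHs_fconv {s : ℝ} (hs : 1 / 2 < s) {q w : ℤ → ℂ} (hq : memHs s q) (hw : memHs s w) :
    Summable fun m => jap m ^ (2 * s) * ‖fconv q w m‖ ^ 2 := by
  have hs0 : (0 : ℝ) ≤ s := by linarith
  have hq1 : Summable fun m => ‖q m‖ := summable_norm_of_memHs hs hq
  have hw1 : Summable fun m => ‖w m‖ := summable_norm_of_memHs hs hw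
  set A : ℤ → ℝ≥0∞ := fun j => ENNReal.ofReal (jap j ^ s * ‖q j‖) with hA
  set B : ℤ → ℝ≥0∞ := fun j => ENNReal.ofReal (jap j ^ s * ‖w j‖) with hB
  set a0 : ℤ → ℝ≥0∞ := fun j => ENNReal.ofReal ‖q j‖ with ha0
  set b0 : ℤ → ℝ≥0∞ := fun j => ENNReal.ofReal ‖w j‖ with hb0
  have hA2 : ∑' j, A j ^ 2 ≠ ⊤ := by
    have : ∀ j, A j ^ 2 = ENNReal.ofReal (jap j ^ (2 * s) * ‖q j‖ ^ 2) := by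
      intro j
      rw [hA, ← ENNReal.ofReal_pow (mul_nonneg (Real.rpow_nonneg (jap_nonneg _) _) (norm_nonneg _))]
      congr 1
      rw [mul_pow, sq (jap j ^ s), jap_rpow_sq]
    rw [tsum_congr this]
    exact enn_tsum_ne_top (fun j => mul_nonneg (Real.rpow_nonneg (jap_nonneg _) _) (sq_nonneg _)) hq
  have hB2 : ∑' j, B j ^ 2 ≠ ⊤ := by
    have : ∀ j, B j ^ 2 = ENNReal.ofReal (jap j ^ (2 * s) * ‖w j‖ ^ 2) := by
      intro j
      rw [hB, ← ENNReal.ofReal_pow (mul_nonneg (Real.rpow_nonneg (jap_nonneg _) _) (norm_nonneg _))]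
      congr 1
      rw [mul_pow, sq (jap j ^ s), jap_rpow_sq]
    rw [tsum_congr this]
    exact enn_tsum_ne_top (fun j => mul_nonneg (Real.rpow_nonneg (jap_nonneg _) _) (sq_nonneg _)) hw
  have ha0t : ∑' j, a0 j ≠ ⊤ := enn_tsum_ne_top (fun _ => norm_nonneg _) hq1
  have hb0t : ∑' j, b0 j ≠ ⊤ := enn_tsum_ne_top (fun _ => norm_nonneg _) hw1
  set G1 : ℤ → ℝ≥0∞ := fun m => ∑' j, A j * b0 (m - j) with hG1
  set G2 : ℤ → ℝ≥0∞ := fun m => ∑' j, B j * a0 (m - j) with hG2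
  set c : ℝ≥0∞ := ENNReal.ofReal (2 ^ s) with hc
  have keyF : ∀ m, ENNReal.ofReal (jap m ^ s) * ENNReal.ofReal ‖fconv q w m‖
      ≤ c * (G1 m + G2 m) := by
    intro m
    have h1 : ENNReal.ofReal ‖fconv q w m‖ ≤ ∑' j, a0 j * b0 (m - j) := by
      calc ENNReal.ofReal ‖fconv q w m‖ ≤ ∑' j, ENNReal.ofReal ‖q j * w (m - j)‖ :=
            enn_ofReal_norm_tsum_le _
        _ = ∑' j, a0 j * b0 (m - j) := tsum_congr fun j => by
            rw [norm_mul, ENNReal.ofReal_mul (norm_nonneg _)]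
    have h2 : ENNReal.ofReal (jap m ^ s) * ENNReal.ofReal ‖fconv q w m‖
        ≤ ∑' j, ENNReal.ofReal (jap m ^ s) * (a0 j * b0 (m - j)) := by
      rw [ENNReal.tsum_mul_left]
      exact mul_le_mul_right h1 _
    have h3 : ∀ j : ℤ, ENNReal.ofReal (jap m ^ s) * (a0 j * b0 (m - j))
        ≤ c * (A j * b0 (m - j) + B (m - j) * a0 j) := by
      intro j
      have hj : jap m ^ s ≤ 2 ^ s * (jap j ^ s + jap (m - j) ^ s) := by
        have := jap_rpow_add_le hs0 j (m - j)
        rwa [show j + (m - j) = m by ring] at this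
      have hofj : ENNReal.ofReal (jap m ^ s)
          ≤ c * (ENNReal.ofReal (jap j ^ s) + ENNReal.ofReal (jap (m - j) ^ s)) := by
        calc ENNReal.ofReal (jap m ^ s)
            ≤ ENNReal.ofReal (2 ^ s * (jap j ^ s + jap (m - j) ^ s)) :=
              ENNReal.ofReal_le_ofReal hj
          _ = c * (ENNReal.ofReal (jap j ^ s) + ENNReal.ofReal (jap (m - j) ^ s)) := by
              rw [ENNReal.ofReal_mul (Real.rpow_nonneg (by norm_num) _),
                ENNReal.ofReal_add (Real.rpow_nonneg (jap_nonneg _) _)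
                  (Real.rpow_nonneg (jap_nonneg _) _)]
      calc ENNReal.ofReal (jap m ^ s) * (a0 j * b0 (m - j))
          ≤ (c * (ENNReal.ofReal (jap j ^ s) + ENNReal.ofReal (jap (m - j) ^ s)))
              * (a0 j * b0 (m - j)) := mul_le_mul_left hofj _
        _ = c * ((ENNReal.ofReal (jap j ^ s) * a0 j) * b0 (m - j)
              + (ENNReal.ofReal (jap (m - j) ^ s) * b0 (m - j)) * a0 j) := by ring
        _ = c * (A j * b0 (m - j) + B (m - j) * a0 j) := by
            rw [hA, hB, ha0, hb0]
            simp only [← ENNReal.ofReal_mul (Real.rpow_nonneg (jap_nonneg _) _)]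
    calc ENNReal.ofReal (jap m ^ s) * ENNReal.ofReal ‖fconv q w m‖
        ≤ ∑' j, ENNReal.ofReal (jap m ^ s) * (a0 j * b0 (m - j)) := h2
      _ ≤ ∑' j, c * (A j * b0 (m - j) + B (m - j) * a0 j) :=
          ENNReal.tsum_le_tsum fun j => h3 j
      _ = c * (∑' j, (A j * b0 (m - j) + B (m - j) * a0 j)) := ENNReal.tsum_mul_left
      _ = c * (G1 m + G2 m) := by
          rw [ENNReal.tsum_add]
          congr 2
          simp only [hG2]
          calc ∑' j, B (m - j) * a0 j = ∑' j, a0 j * B (m - j) :=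
                tsum_congr fun j => mul_comm _ _
            _ = ∑' j, B j * a0 (m - j) := conv_comm_enn a0 B m
  apply summable_of_enn_tsum_ne_top
    (fun m => mul_nonneg (Real.rpow_nonneg (jap_nonneg _) _) (sq_nonneg _))
  have hpt : ∀ m : ℤ, ENNReal.ofReal (jap m ^ (2 * s) * ‖fconv q w m‖ ^ 2)
      = (ENNReal.ofReal (jap m ^ s) * ENNReal.ofReal ‖fconv q w m‖) ^ 2 := by
    intro m
    rw [← ENNReal.ofReal_mul (Real.rpow_nonneg (jap_nonneg _) _),
      ← ENNReal.ofReal_pow (mul_nonneg (Real.rpow_nonneg (jap_nonneg _) _) (norm_nonneg _))]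
    congr 1
    rw [mul_pow, sq (jap m ^ s), jap_rpow_sq]
  rw [tsum_congr hpt]
  have step : ∑' m, (ENNReal.ofReal (jap m ^ s) * ENNReal.ofReal ‖fconv q w m‖) ^ 2
      ≤ c ^ 2 * (3 * (∑' m, G1 m ^ 2 + ∑' m, G2 m ^ 2)) := by
    calc ∑' m, (ENNReal.ofReal (jap m ^ s) * ENNReal.ofReal ‖fconv q w m‖) ^ 2
        ≤ ∑' m, (c * (G1 m + G2 m)) ^ 2 :=
          ENNReal.tsum_le_tsum fun m => pow_le_pow_left' (keyF m) 2
      _ = ∑' m, c ^ 2 * (G1 m + G2 m) ^ 2 := tsum_congr fun m => by ring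
      _ = c ^ 2 * ∑' m, (G1 m + G2 m) ^ 2 := ENNReal.tsum_mul_left
      _ ≤ c ^ 2 * ∑' m, 3 * (G1 m ^ 2 + G2 m ^ 2) :=
          mul_le_mul_right (ENNReal.tsum_le_tsum fun m => enn_sq_add_le _ _) _
      _ = c ^ 2 * (3 * (∑' m, G1 m ^ 2 + ∑' m, G2 m ^ 2)) := by
          rw [ENNReal.tsum_mul_left, ENNReal.tsum_add]
  apply ne_top_of_le_ne_top _ step
  have hG1t : ∑' m, G1 m ^ 2 ≠ ⊤ :=
    ne_top_of_le_ne_top (by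
      exact ENNReal.mul_ne_top (by norm_num)
        (ENNReal.mul_ne_top hA2 (ENNReal.pow_ne_top hb0t))) (enn_young A b0)
  have hG2t : ∑' m, G2 m ^ 2 ≠ ⊤ :=
    ne_top_of_le_ne_top (by
      exact ENNReal.mul_ne_top (by norm_num)
        (ENNReal.mul_ne_top hB2 (ENNReal.pow_ne_top ha0t))) (enn_young B a0)
  exact ENNReal.mul_ne_top (ENNReal.pow_ne_top ENNReal.ofReal_ne_top)
    (ENNReal.mul_ne_top (by norm_num) (ENNReal.add_ne_top.2 ⟨hG1t, hG2t⟩))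

lemma memHs_TnOp {s : ℝ} (hs : 1 / 2 < s) {q : ℤ → ℂ} {lam : ℂ} {n : ℕ}
    (hD : ∀ m, ‖Dco lam n m‖ ≤ 2) (hq : memHs s q) {w : ℤ → ℂ} (hw : memHs s w) :
    memHs s (TnOp q lam n w) := by
  unfold memHs
  apply Summable.of_nonneg_of_le
    (fun m => mul_nonneg (Real.rpow_nonneg (jap_nonneg _) _) (sq_nonneg _)) _
    ((memHs_fconv hs hq hw).mul_left 4)
  intro m
  have h1 : ‖TnOp q lam n w m‖ ≤ 2 * ‖fconv q w m‖ := by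
    have : TnOp q lam n w m = Dco lam n m * fconv q w m := by
      rw [TnOp_eq]
      rfl
    rw [this, norm_mul]
    exact mul_le_mul_of_nonneg_right (hD m) (norm_nonneg _)
  have h2 : ‖TnOp q lam n w m‖ ^ 2 ≤ 4 * ‖fconv q w m‖ ^ 2 := by
    nlinarith [norm_nonneg (TnOp q lam n w m), norm_nonneg (fconv q w m)]
  have h3 : (0:ℝ) ≤ jap m ^ (2 * s) := Real.rpow_nonneg (jap_nonneg _) _
  calc jap m ^ (2 * s) * ‖TnOp q lam n w m‖ ^ 2
      ≤ jap m ^ (2 * s) * (4 * ‖fconv q w m‖ ^ 2) := by nlinarith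
    _ = 4 * (jap m ^ (2 * s) * ‖fconv q w m‖ ^ 2) := by ring

lemma memQ_TnOp (q : ℤ → ℂ) (lam : ℂ) (n : ℕ) (w : ℤ → ℂ) : memQ n (TnOp q lam n w) := by
  constructor
  · show TnOp q lam n w (n : ℤ) = 0
    unfold TnOp
    rw [if_pos (Int.abs_natCast n)]
  · show TnOp q lam n w (-(n : ℤ)) = 0
    unfold TnOp
    rw [if_pos (by rw [abs_neg]; exact Int.abs_natCast n)]

lemma memHs_efun (s : ℝ) (p : ℤ) : memHs s (efun p) := by
  unfold memHs
  refine Summable.congr (⟨_, hasSum_ite_eq p (jap p ^ (2 * s) * 1)⟩ :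
    Summable fun m : ℤ => if m = p then jap p ^ (2 * s) * 1 else 0) ?_
  intro m
  by_cases h : m = p
  · subst h; simp [efun]
  · simp [efun, h]
/-! ### Geometric decay of the Neumann iterates, and the series formula for `a_p` -/

lemma shiftNorm_nonneg (s : ℝ) (j : ℤ) (u : ℤ → ℂ) : 0 ≤ shiftNorm s j u :=
  Real.sqrt_nonneg _

lemma habs_of_hlam {n : ℕ} {lam : ℝ} (hlam : |lam - (n : ℝ) ^ 2| ≤ (n : ℝ) / 2) :
    ‖(lam : ℂ) - (n : ℂ) ^ 2‖ ≤ (n : ℝ) / 2 := by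
  have h : ((lam : ℂ) - (n : ℂ) ^ 2) = ((lam - (n : ℝ) ^ 2 : ℝ) : ℂ) := by push_cast; ring
  rw [h, Complex.norm_real, Real.norm_eq_abs]
  exact hlam

lemma iter_facts {s Cs : ℝ} (hs : 1 / 2 < s) (hCs : 0 < Cs)
    (hbound : ∀ (q : ℤ → ℂ) (n : ℕ) (lam : ℂ) (j : ℤ) (w : ℤ → ℂ),
      1 ≤ n → memHs s q →
      ‖lam - (n : ℂ) ^ 2‖ ≤ (n : ℝ) / 2 →
      memQ n w → memHs s w →
      shiftNorm s j (TnOp q lam n w) ≤ Cs * (n : ℝ)⁻¹ * sobNorm s q * shiftNorm s j w)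
    {q : ℤ → ℂ} {n : ℕ} (hn : 1 ≤ n) (hq : memHs s q)
    (hqsmall : sobNorm s q ≤ (n : ℝ) / (2 * Cs))
    {lam : ℝ} (hlam : |lam - (n : ℝ) ^ 2| ≤ (n : ℝ) / 2)
    {w0 : ℤ → ℂ} (hw0Q : memQ n w0) (hw0H : memHs s w0) : ∀ k : ℕ,
      memHs s ((TnOp q (lam : ℂ) n)^[k] w0) ∧ memQ n ((TnOp q (lam : ℂ) n)^[k] w0) ∧
      sobNorm s ((TnOp q (lam : ℂ) n)^[k] w0) ≤ (1 / 2 : ℝ) ^ k * sobNorm s w0 := by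
  have hD := Dco_norm_le hn hlam
  have habs := habs_of_hlam hlam
  have hn0 : (0 : ℝ) < n := by exact_mod_cast Nat.lt_of_lt_of_le Nat.zero_lt_one hn
  have hfac : Cs * (n : ℝ)⁻¹ * sobNorm s q ≤ 1 / 2 := by
    have h1 : Cs * (n : ℝ)⁻¹ * sobNorm s q ≤ Cs * (n : ℝ)⁻¹ * ((n : ℝ) / (2 * Cs)) :=
      mul_le_mul_of_nonneg_left hqsmall (by positivity)
    have h2 : Cs * (n : ℝ)⁻¹ * ((n : ℝ) / (2 * Cs)) = 1 / 2 := by field_simp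
    linarith
  intro k
  induction k with
  | zero => exact ⟨hw0H, hw0Q, by simp⟩
  | succ k ih =>
      obtain ⟨ihH, ihQ, ihB⟩ := ih
      refine ⟨?_, ?_, ?_⟩
      · rw [iterate_succ_apply']
        exact memHs_TnOp hs hD hq ihH
      · rw [iterate_succ_apply']
        exact memQ_TnOp _ _ _ _
      · rw [iterate_succ_apply']
        have hb := hbound q n (lam : ℂ) 0 _ hn hq habs ihQ ihH
        have hstep : Cs * (n : ℝ)⁻¹ * sobNorm s q
              * shiftNorm s 0 ((TnOp q (lam : ℂ) n)^[k] w0)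
            ≤ (1 / 2 : ℝ) * ((1 / 2 : ℝ) ^ k * sobNorm s w0) :=
          mul_le_mul hfac ihB (shiftNorm_nonneg _ _ _)
            (by norm_num)
        calc sobNorm s (TnOp q (lam : ℂ) n ((TnOp q (lam : ℂ) n)^[k] w0))
            = shiftNorm s 0 (TnOp q (lam : ℂ) n ((TnOp q (lam : ℂ) n)^[k] w0)) := rfl
          _ ≤ Cs * (n : ℝ)⁻¹ * sobNorm s q
              * shiftNorm s 0 ((TnOp q (lam : ℂ) n)^[k] w0) := hb
          _ ≤ (1 / 2 : ℝ) * ((1 / 2 : ℝ) ^ k * sobNorm s w0) := hstep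
          _ = (1 / 2 : ℝ) ^ (k + 1) * sobNorm s w0 := by
              rw [pow_succ]; ring

lemma a_formula {s Cs : ℝ} (hs : 1 / 2 < s) (hCs : 0 < Cs)
    (hbound : ∀ (q : ℤ → ℂ) (n : ℕ) (lam : ℂ) (j : ℤ) (w : ℤ → ℂ),
      1 ≤ n → memHs s q →
      ‖lam - (n : ℂ) ^ 2‖ ≤ (n : ℝ) / 2 →
      memQ n w → memHs s w →
      shiftNorm s j (TnOp q lam n w) ≤ Cs * (n : ℝ)⁻¹ * sobNorm s q * shiftNorm s j w)
    {q : ℤ → ℂ} {n : ℕ} (hn : 1 ≤ n) (hq : memHs s q)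
    (hqsmall : sobNorm s q ≤ (n : ℝ) / (2 * Cs))
    {lam : ℝ} (hlam : |lam - (n : ℝ) ^ 2| ≤ (n : ℝ) / 2) (p : ℤ) :
    fconv q (gfun q (lam : ℂ) n p) p
      = q 0 + ∑' k : ℕ, fconv q ((TnOp q (lam : ℂ) n)^[k + 1] (efun p)) p := by
  have hs0 : (0 : ℝ) ≤ s := by linarith
  have hD := Dco_norm_le hn hlam
  have hq1 : Summable fun j => ‖q j‖ := summable_norm_of_memHs hs hq
  set lamc : ℂ := (lam : ℂ)
  set w0 : ℤ → ℂ := TnOp q lamc n (efun p) with hw0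
  have hw0Q : memQ n w0 := memQ_TnOp _ _ _ _
  have hw0H : memHs s w0 := memHs_TnOp hs hD hq (memHs_efun s p)
  have facts := iter_facts hs hCs hbound hn hq hqsmall hlam hw0Q hw0H
  set M : ℝ := sobNorm s w0 with hM
  have hM0 : 0 ≤ M := shiftNorm_nonneg _ _ _
  have hsup : ∀ (k : ℕ) (m : ℤ), ‖(TnOp q lamc n)^[k] w0 m‖ ≤ (1 / 2 : ℝ) ^ k * M :=
    fun k m => le_trans (norm_le_sobNorm hs0 (facts k).1 m) (facts k).2.2
  have hgeo : Summable fun k : ℕ => (1 / 2 : ℝ) ^ k * M :=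
    (summable_geometric_of_lt_one (by norm_num) (by norm_num)).mul_right M
  have hksum : ∀ m, Summable fun k : ℕ => ‖(TnOp q lamc n)^[k] w0 m‖ := fun m =>
    Summable.of_nonneg_of_le (fun k => norm_nonneg _) (fun k => hsup k m) hgeo
  set B : ℝ := ∑' k : ℕ, (1 / 2 : ℝ) ^ k * M with hB
  have hnu : ∀ m, ‖neumann q lamc n w0 m‖ ≤ B := by
    intro m
    calc ‖neumann q lamc n w0 m‖ ≤ ∑' k : ℕ, ‖(TnOp q lamc n)^[k] w0 m‖ :=
          norm_tsum_le_tsum_norm (hksum m)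
      _ ≤ B := Summable.tsum_le_tsum (fun k => hsup k m) (hksum m) hgeo
  have hgsplit : fconv q (gfun q lamc n p) p
      = (∑' j, q j * efun p (p - j)) + ∑' j, q j * neumann q lamc n w0 (p - j) := by
    unfold fconv gfun
    rw [← Summable.tsum_add ?h1 ?h2]
    · exact tsum_congr fun j => by
        rw [Pi.add_apply, mul_add]
    case h1 =>
      apply Summable.of_norm_bounded (hq1.mul_right 1)
      intro j
      rw [norm_mul]
      refine mul_le_mul_of_nonneg_left ?_ (norm_nonneg _)
      simp only [efun]
      split_ifs <;> simp
    case h2 => exact summable_conv_term hq1 hnu p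
  have hfirst : (∑' j, q j * efun p (p - j)) = q 0 := by
    have he : ∀ j : ℤ, q j * efun p (p - j) = if j = 0 then q 0 else 0 := by
      intro j
      by_cases h : j = 0
      · subst h; simp [efun]
      · have : ¬(p - j = p) := by omega
        simp [efun, this, h]
    rw [tsum_congr he]
    exact tsum_ite_eq 0 (fun _ => q 0)
  have hswap : (∑' j, q j * neumann q lamc n w0 (p - j))
      = ∑' k : ℕ, ∑' j : ℤ, q j * (TnOp q lamc n)^[k] w0 (p - j) := by
    have huncur : Summable (Function.uncurry fun (k : ℕ) (j : ℤ) =>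
        q j * (TnOp q lamc n)^[k] w0 (p - j)) := by
      apply Summable.of_norm_bounded
        (g := fun x : ℕ × ℤ => ((1 / 2 : ℝ) ^ x.1 * M) * ‖q x.2‖)
        (hgeo.mul_of_nonneg hq1 (fun k => by positivity) (fun j => norm_nonneg _))
      rintro ⟨k, j⟩
      simp only [Function.uncurry]
      rw [norm_mul]
      calc ‖q j‖ * ‖(TnOp q lamc n)^[k] w0 (p - j)‖
          ≤ ‖q j‖ * ((1 / 2 : ℝ) ^ k * M) :=
            mul_le_mul_of_nonneg_left (hsup k (p - j)) (norm_nonneg _)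
        _ = ((1 / 2 : ℝ) ^ k * M) * ‖q j‖ := mul_comm _ _
    calc ∑' j, q j * neumann q lamc n w0 (p - j)
        = ∑' j : ℤ, ∑' k : ℕ, q j * (TnOp q lamc n)^[k] w0 (p - j) := by
          unfold neumann
          exact tsum_congr fun j => tsum_mul_left.symm
      _ = ∑' k : ℕ, ∑' j : ℤ, q j * (TnOp q lamc n)^[k] w0 (p - j) := Summable.tsum_comm huncur
  rw [hgsplit, hfirst, hswap]
  congr 1

/-- **Lemma 3.4 (i).** `a_n = a_{−n}`, where `a_{±n} := (q·g_{±n}, e_{±n})_{L²}`. -/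
theorem lemma_3_4_i (s : ℝ) (hs : 1 / 2 < s) (Cs : ℝ) (hCs : 0 < Cs)
    (hbound : ∀ (q : ℤ → ℂ) (n : ℕ) (lam : ℂ) (j : ℤ) (w : ℤ → ℂ),
      1 ≤ n → memHs s q →
      ‖lam - (n : ℂ) ^ 2‖ ≤ (n : ℝ) / 2 →
      memQ n w → memHs s w →
      shiftNorm s j (TnOp q lam n w) ≤ Cs * (n : ℝ)⁻¹ * sobNorm s q * shiftNorm s j w)
    (q : ℤ → ℂ) (n : ℕ) (hn : 1 ≤ n) (hq : memHs s q)
    (hqsmall : sobNorm s q ≤ (n : ℝ) / (2 * Cs))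
    (lam : ℝ) (hlam : |lam - (n : ℝ) ^ 2| ≤ (n : ℝ) / 2) :
    fconv q (gfun q (lam : ℂ) n (n : ℤ)) (n : ℤ) =
      fconv q (gfun q (lam : ℂ) n (-(n : ℤ))) (-(n : ℤ)) := by
  have hD := Dco_norm_le hn hlam
  have hq1 : Summable fun j => ‖q j‖ := summable_norm_of_memHs hs hq
  rw [a_formula hs hCs hbound hn hq hqsmall hlam (n : ℤ),
    a_formula hs hCs hbound hn hq hqsmall hlam (-(n : ℤ))]
  have hterm : (∑' k : ℕ, fconv q ((TnOp q (lam : ℂ) n)^[k + 1] (efun (n : ℤ))) (n : ℤ))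
      = ∑' k : ℕ, fconv q ((TnOp q (lam : ℂ) n)^[k + 1] (efun (-(n : ℤ)))) (-(n : ℤ)) :=
    tsum_congr fun k => (perk_transpose hq1 hD k).trans (perk_reflect k).symm
  rw [hterm]
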